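/- Let V be a finite set, let B ⊆ 2^V be a nonempty Sperner hypergraph, and define Ψ = {(A, v) : A ∈ B^*, v ∈ V∖A, v ∉ ∪B^{V∖A}}. Let φ be a finite set of pairs (A, v) with A ⊆ V, v ∈ V∖A, such that no clause A → v with (A, v) ∈ φ is an implicate of Φ_B. Let h be the pure Horn function whose true assignments are the true assignments of Φ_B that additionally satisfy every clause A → v with (A, v) ∈ φ. Then K(h) = B if and only if φ ⊆ Ψ. -/

import Mathlib

open scoped Classical

variable {V : Type*} [Fintype V] [DecidableEq V]

/-- A Sperner hypergraph: no hyperedge contains another one. -/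
def SpernerFam (𝓑 : Set (Finset V)) : Prop :=
  ∀ B₁ ∈ 𝓑, ∀ B₂ ∈ 𝓑, B₁ ⊆ B₂ → B₁ = B₂

/-- `T` is a transversal of `𝓑` if it meets every hyperedge. -/
def IsTransversal (𝓑 : Set (Finset V)) (T : Finset V) : Prop :=
  ∀ B ∈ 𝓑, (T ∩ B).Nonempty

/-- `𝓑^d`: the family of inclusion-minimal transversals of `𝓑`. -/
def dualHyp (𝓑 : Set (Finset V)) : Set (Finset V) :=
  {T | IsTransversal 𝓑 T ∧ ∀ T', IsTransversal 𝓑 T' → T' ⊆ T → T' = T}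

/-- `𝓑_S`: the subhypergraph of `𝓑` induced by `S`. -/
def inducedHyp (𝓑 : Set (Finset V)) (S : Finset V) : Set (Finset V) :=
  {B | B ∈ 𝓑 ∧ B ⊆ S}

/-- `𝓑^S`: the family of inclusion-minimal members of `{S ∩ B : B ∈ 𝓑}`,
the projection of `𝓑` to `S`. -/
def projHyp (𝓑 : Set (Finset V)) (S : Finset V) : Set (Finset V) :=
  {C | (∃ B ∈ 𝓑, C = S ∩ B) ∧ ∀ B ∈ 𝓑, S ∩ B ⊆ C → S ∩ B = C}

/-- A Boolean function `h` on `V` is pure Horn if its set of true assignments contains the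
all-true assignment and is closed under componentwise AND. -/
def PureHorn (h : (V → Bool) → Bool) : Prop :=
  h (fun _ => true) = true ∧
  ∀ x y : V → Bool, h x = true → h y = true → h (fun v => x v && y v) = true

/-- The clause `A → v` is an implicate of `h`: every true assignment of `h` that is true on
every element of `A` is also true at `v`. -/
def Implicate (h : (V → Bool) → Bool) (A : Finset V) (v : V) : Prop :=
  ∀ x : V → Bool, h x = true → (∀ a ∈ A, x a = true) → x v = true

/-- `K` is a key of `h` if `K → v` is an implicate of `h` for every `v ∈ V \ K`. -/
def IsKey (h : (V → Bool) → Bool) (K : Finset V) : Prop :=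
  ∀ v ∉ K, Implicate h K v

/-- `𝒦(h)`: the family of inclusion-minimal keys of `h`. -/
def minKeys (h : (V → Bool) → Bool) : Set (Finset V) :=
  {K | IsKey h K ∧ ∀ K', IsKey h K' → K' ⊆ K → K' = K}

/-- `Φ_𝓑`: the pure Horn function whose true assignments are exactly those `x` such that for
every `B ∈ 𝓑` on which `x` is identically true, `x` is identically true on all of `V`. -/
noncomputable def PhiB (𝓑 : Set (Finset V)) : (V → Bool) → Bool :=
  fun x => decide (∀ B ∈ 𝓑, (∀ u ∈ B, x u = true) → ∀ v : V, x v = true)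

/-- `S` is an independent set of `𝓑`: its complement is a transversal. -/
def IndepOf (𝓑 : Set (Finset V)) (S : Finset V) : Prop :=
  IsTransversal 𝓑 (Finset.univ \ S)

/-! ### Auxiliary definitions and lemmas -/

/-- A set-level description of the non-all-true satisfying assignments of the constrained
pure Horn function. -/
def SatP (𝓑 : Set (Finset V)) (φ : Finset (Finset V × V)) (S : Finset V) : Prop :=
  (∀ B ∈ 𝓑, ¬ B ⊆ S) ∧ ∀ c ∈ φ, c.1 ⊆ S → c.2 ∈ S

lemma hfun_true_iff (𝓑 : Set (Finset V)) (φ : Finset (Finset V × V)) (x : V → Bool) :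
    (PhiB 𝓑 x && decide (∀ c ∈ φ, (∃ a ∈ c.1, x a = false) ∨ x c.2 = true)) = true ↔
      ((∀ v, x v = true) ∨ SatP 𝓑 φ (Finset.univ.filter fun u => x u = true)) := by
  rw [Bool.and_eq_true, decide_eq_true_iff]
  unfold PhiB
  rw [decide_eq_true_iff]
  constructor
  · rintro ⟨h1, h2⟩
    by_cases hall : ∀ v, x v = true
    · exact Or.inl hall
    · refine Or.inr ⟨?_, ?_⟩
      · intro B hB hBS
        exact hall (h1 B hB fun u hu => (Finset.mem_filter.1 (hBS hu)).2)
      · intro c hc hcS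
        rcases h2 c hc with ⟨a, ha, hfa⟩ | htv
        · have := (Finset.mem_filter.1 (hcS ha)).2
          simp [this] at hfa
        · exact Finset.mem_filter.2 ⟨Finset.mem_univ _, htv⟩
  · rintro (hall | ⟨h1, h2⟩)
    · exact ⟨fun _ _ _ => hall, fun c _ => Or.inr (hall c.2)⟩
    · constructor
      · intro B hB hBx
        exact absurd (fun u hu => Finset.mem_filter.2 ⟨Finset.mem_univ u, hBx u hu⟩) (h1 B hB)
      · intro c hc
        by_cases hA : ∀ a ∈ c.1, x a = true
        · have hsub : c.1 ⊆ Finset.univ.filter fun u => x u = true := fun a ha =>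
            Finset.mem_filter.2 ⟨Finset.mem_univ a, hA a ha⟩
          exact Or.inr (Finset.mem_filter.1 (h2 c hc hsub)).2
        · push_neg at hA
          obtain ⟨a, ha, hxa⟩ := hA
          exact Or.inl ⟨a, ha, by simpa using hxa⟩

lemma isKey_iff (𝓑 : Set (Finset V)) (hne : 𝓑.Nonempty) (φ : Finset (Finset V × V))
    (K : Finset V) :
    IsKey (fun x => PhiB 𝓑 x &&
        decide (∀ c ∈ φ, (∃ a ∈ c.1, x a = false) ∨ x c.2 = true)) K ↔
      ∀ S : Finset V, SatP 𝓑 φ S → ¬ K ⊆ S := by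
  constructor
  · intro hK S hS hKS
    classical
    set x : V → Bool := fun u => decide (u ∈ S) with hx
    have hfx : (Finset.univ.filter fun u => x u = true) = S := by
      ext u; simp [hx]
    have hxt : (PhiB 𝓑 x &&
        decide (∀ c ∈ φ, (∃ a ∈ c.1, x a = false) ∨ x c.2 = true)) = true :=
      (hfun_true_iff 𝓑 φ x).2 (Or.inr (by rw [hfx]; exact hS))
    have hSuniv : S = Finset.univ := by
      apply Finset.eq_univ_of_forall
      intro v
      by_cases hvK : v ∈ K
      · exact hKS hvK
      · have := hK v hvK x hxt fun a haK => by simp [hx, hKS haK]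
        simpa [hx] using this
    obtain ⟨B, hB⟩ := hne
    exact hS.1 B hB (by rw [hSuniv]; exact Finset.subset_univ B)
  · intro hA v hvK x hx hKx
    rcases (hfun_true_iff 𝓑 φ x).1 hx with hall | hS
    · exact hall v
    · exact absurd (fun a haK => Finset.mem_filter.2 ⟨Finset.mem_univ a, hKx a haK⟩)
        (hA _ hS)

lemma indepOf_iff (𝓑 : Set (Finset V)) (A : Finset V) :
    IndepOf 𝓑 A ↔ ∀ B ∈ 𝓑, ¬ B ⊆ A := by
  unfold IndepOf IsTransversal
  refine forall₂_congr fun B hB => ?_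
  constructor
  · rintro ⟨u, hu⟩ hBA
    rw [Finset.mem_inter, Finset.mem_sdiff] at hu
    exact hu.1.2 (hBA hu.2)
  · intro h
    rcases Finset.not_subset.1 h with ⟨u, huB, huA⟩
    exact ⟨u, Finset.mem_inter.2 ⟨Finset.mem_sdiff.2 ⟨Finset.mem_univ u, huA⟩, huB⟩⟩

lemma exists_proj_min (𝓑 : Set (Finset V)) (A : Finset V) {B : Finset V} (hB : B ∈ 𝓑) :
    ∃ C ∈ projHyp 𝓑 (Finset.univ \ A), C ⊆ (Finset.univ \ A) ∩ B := by
  obtain ⟨C, hCmem, hCmin⟩ := Set.Finite.exists_minimalFor id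
    {C : Finset V | (∃ B' ∈ 𝓑, C = (Finset.univ \ A) ∩ B') ∧ C ⊆ (Finset.univ \ A) ∩ B}
    (Set.toFinite _) ⟨(Finset.univ \ A) ∩ B, ⟨B, hB, rfl⟩, Finset.Subset.refl _⟩
  refine ⟨C, ⟨hCmem.1, ?_⟩, hCmem.2⟩
  intro B' hB' hsub
  exact Finset.Subset.antisymm hsub (hCmin ⟨⟨B', hB', rfl⟩, hsub.trans hCmem.2⟩ hsub)

omit [DecidableEq V] in
lemma exists_minKey_subset (h : (V → Bool) → Bool) {K : Finset V} (hK : IsKey h K) :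
    ∃ K' ∈ minKeys h, K' ⊆ K := by
  obtain ⟨K', hmem, hmin⟩ := Set.Finite.exists_minimalFor id
    {K' : Finset V | IsKey h K' ∧ K' ⊆ K} (Set.toFinite _) ⟨K, hK, Finset.Subset.refl _⟩
  exact ⟨K', ⟨hmem.1, fun K'' hK'' hsub => Finset.Subset.antisymm hsub (hmin ⟨hK'', hsub.trans hmem.2⟩ hsub)⟩,
    hmem.2⟩

/-- Let `𝓑` be a nonempty Sperner hypergraph, and let `φ` be a finite set of clauses
`(A, v)` (with `v ∉ A`), none of which is an implicate of `Φ_𝓑`. Let `h` be the pure Horn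
function whose true assignments are the true assignments of `Φ_𝓑` additionally satisfying
all clauses of `φ`. Then `𝒦(h) = 𝓑` iff `φ ⊆ Ψ`, where
`Ψ = {(A, v) : A ∈ 𝓑^*, v ∈ V∖A, v ∉ ∪ 𝓑^{V∖A}}`. -/
theorem stmt4 (𝓑 : Set (Finset V)) (hne : 𝓑.Nonempty) (hSp : SpernerFam 𝓑)
    (φ : Finset (Finset V × V))
    (hv : ∀ c ∈ φ, c.2 ∉ c.1)
    (hni : ∀ c ∈ φ, ¬ Implicate (PhiB 𝓑) c.1 c.2) :
    minKeys (fun x => PhiB 𝓑 x &&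
        decide (∀ c ∈ φ, (∃ a ∈ c.1, x a = false) ∨ x c.2 = true)) = 𝓑 ↔
      ∀ c ∈ φ, IndepOf 𝓑 c.1 ∧
        c.2 ∉ ⋃ C ∈ projHyp 𝓑 (Finset.univ \ c.1), (C : Set V) := by
  have hIndep : ∀ c ∈ φ, ∀ B ∈ 𝓑, ¬ B ⊆ c.1 := by
    intro c hc B hB hBA
    apply hni c hc
    intro x hx hxA
    unfold PhiB at hx
    rw [decide_eq_true_iff] at hx
    exact hx B hB (fun u hu => hxA u (hBA hu)) c.2
  constructor
  · -- minKeys = 𝓑 → φ ⊆ Ψ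
    intro hmk c hc
    refine ⟨(indepOf_iff 𝓑 c.1).2 (hIndep c hc), ?_⟩
    intro hvmem
    rw [Set.mem_iUnion₂] at hvmem
    obtain ⟨C, hC, hvC⟩ := hvmem
    obtain ⟨⟨B₀, hB₀, hCeq⟩, hCmin⟩ := hC
    have hvC' : c.2 ∈ C := Finset.mem_coe.1 hvC
    set K : Finset V := c.1 ∪ C.erase c.2 with hKdef
    have hKkey : IsKey (fun x => PhiB 𝓑 x &&
        decide (∀ c ∈ φ, (∃ a ∈ c.1, x a = false) ∨ x c.2 = true)) K := by
      rw [isKey_iff 𝓑 hne φ K]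
      intro S hS hKS
      have hAS : c.1 ⊆ S := (Finset.subset_union_left).trans hKS
      have hv2S : c.2 ∈ S := hS.2 c hc hAS
      have hB₀S : B₀ ⊆ S := by
        intro u hu
        by_cases hua : u ∈ c.1
        · exact hAS hua
        · have huC : u ∈ C := by
            rw [hCeq, Finset.mem_inter, Finset.mem_sdiff]
            exact ⟨⟨Finset.mem_univ u, hua⟩, hu⟩
          by_cases huv : u = c.2
          · exact huv ▸ hv2S
          · exact hKS (Finset.mem_union.2 (Or.inr (Finset.mem_erase.2 ⟨huv, huC⟩)))
      exact hS.1 B₀ hB₀ hB₀S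
    obtain ⟨K', hK'min, hK'sub⟩ := exists_minKey_subset _ hKkey
    rw [hmk] at hK'min
    have hsub : (Finset.univ \ c.1) ∩ K' ⊆ C.erase c.2 := by
      intro u hu
      rw [Finset.mem_inter, Finset.mem_sdiff] at hu
      rcases Finset.mem_union.1 (hK'sub hu.2) with h1 | h2
      · exact absurd h1 hu.1.2
      · exact h2
    have heq := hCmin K' hK'min (hsub.trans (Finset.erase_subset _ _))
    have : c.2 ∈ C.erase c.2 := hsub (by rw [heq]; exact hvC')
    exact Finset.notMem_erase _ _ this
  · -- φ ⊆ Ψ → minKeys = 𝓑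
    intro hΨ
    have keyB : ∀ B ∈ 𝓑, IsKey (fun x => PhiB 𝓑 x &&
        decide (∀ c ∈ φ, (∃ a ∈ c.1, x a = false) ∨ x c.2 = true)) B := by
      intro B hB
      rw [isKey_iff 𝓑 hne φ B]
      intro S hS
      exact hS.1 B hB
    have keysub : ∀ K : Finset V, IsKey (fun x => PhiB 𝓑 x &&
        decide (∀ c ∈ φ, (∃ a ∈ c.1, x a = false) ∨ x c.2 = true)) K →
        ∃ B ∈ 𝓑, B ⊆ K := by
      intro K hK
      by_contra hcon
      push_neg at hcon
      obtain ⟨S, hSmem, hSmax⟩ := Set.Finite.exists_maximalFor id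
        {S : Finset V | K ⊆ S ∧ ∀ B ∈ 𝓑, ¬ B ⊆ S} (Set.toFinite _)
        ⟨K, Finset.Subset.refl _, hcon⟩
      have hSat : SatP 𝓑 φ S := by
        refine ⟨hSmem.2, ?_⟩
        intro c hc hAS
        by_contra hv2
        have hnotind : ¬ ∀ B ∈ 𝓑, ¬ B ⊆ insert c.2 S := by
          intro hind
          have := hSmax
            ⟨hSmem.1.trans (Finset.subset_insert _ _), hind⟩
            (Finset.subset_insert _ _)
          have heq : S = insert c.2 S := Finset.Subset.antisymm (Finset.subset_insert _ _) this
          exact hv2 (heq ▸ Finset.mem_insert_self c.2 S)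
        push_neg at hnotind
        obtain ⟨B, hB, hBins⟩ := hnotind
        obtain ⟨C, hCproj, hCsub⟩ := exists_proj_min 𝓑 c.1 hB
        have hvnotC : c.2 ∉ C := by
          have := (hΨ c hc).2
          rw [Set.mem_iUnion₂] at this
          push_neg at this
          intro hmem
          exact this C hCproj (Finset.mem_coe.2 hmem)
        obtain ⟨B'', hB'', hCeq⟩ := hCproj.1
        have hB''S : B'' ⊆ S := by
          intro u hu
          by_cases hua : u ∈ c.1
          · exact hAS hua
          · have huC : u ∈ C := by
              rw [hCeq, Finset.mem_inter, Finset.mem_sdiff]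
              exact ⟨⟨Finset.mem_univ u, hua⟩, hu⟩
            have huB : u ∈ B := (Finset.mem_inter.1 (hCsub huC)).2
            rcases Finset.mem_insert.1 (hBins huB) with h1 | h2
            · exact absurd (h1 ▸ huC) hvnotC
            · exact h2
        exact hSmem.2 B'' hB'' hB''S
      exact (isKey_iff 𝓑 hne φ K).1 hK S hSat hSmem.1
    ext K
    simp only [minKeys, Set.mem_setOf_eq]
    constructor
    · rintro ⟨hKkey, hKmin⟩
      obtain ⟨B, hB, hBK⟩ := keysub K hKkey
      have hBeq := hKmin B (keyB B hB) hBK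
      rwa [← hBeq]
    · intro hB
      refine ⟨keyB K hB, ?_⟩
      intro K' hK' hsub
      obtain ⟨B', hB', hB'K'⟩ := keysub K' hK'
      have hBeq : B' = K := hSp B' hB' K hB (hB'K'.trans hsub)
      exact Finset.Subset.antisymm hsub (hBeq ▸ hB'K')
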